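/- Let μ be a p×q interval matrix. Then rkRange(μ) = [mrk(μ), Mrk(μ)] ∩ ℕ; that is, for every natural number r with mrk(μ) ≤ r ≤ Mrk(μ) there exists a matrix A ∈ μ with rank(A) = r. -/

import Mathlib

open Set Matrix

lemma myrank_add_le {p q : ℕ} (A B : Matrix (Fin p) (Fin q) ℝ) :
    (A + B).rank ≤ A.rank + B.rank := by
  have hrange : LinearMap.range (A + B).mulVecLin ≤
      LinearMap.range A.mulVecLin ⊔ LinearMap.range B.mulVecLin := by
    rintro x ⟨v, rfl⟩
    rw [Matrix.mulVecLin_add]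
    exact Submodule.add_mem_sup ⟨v, rfl⟩ ⟨v, rfl⟩
  have h1 : (A + B).rank ≤ Module.finrank ℝ
      ↥(LinearMap.range A.mulVecLin ⊔ LinearMap.range B.mulVecLin) :=
    Submodule.finrank_mono hrange
  exact h1.trans (Submodule.finrank_add_le_finrank_add_finrank _ _)

lemma myrank_std_le {p q : ℕ} (i : Fin p) (j : Fin q) (c : ℝ) :
    (Matrix.single i j c).rank ≤ 1 := by
  classical
  have hrange : LinearMap.range (Matrix.single i j c).mulVecLin ≤
      Submodule.span ℝ {Function.update (0 : Fin p → ℝ) i 1} := by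
    rintro x ⟨v, rfl⟩
    have : (Matrix.single i j c).mulVecLin v
        = (c * v j) • Function.update (0 : Fin p → ℝ) i 1 := by
      rw [Matrix.mulVecLin_apply, Matrix.single_mulVec]
      ext i'
      rcases eq_or_ne i' i with rfl | h
      · simp
      · simp [Function.update_of_ne h]
    rw [this]
    exact Submodule.smul_mem _ _ (Submodule.mem_span_singleton_self _)
  calc (Matrix.single i j c).rank
      ≤ Module.finrank ℝ ↥(Submodule.span ℝ {Function.update (0 : Fin p → ℝ) i 1}) :=
        Submodule.finrank_mono hrange
    _ ≤ 1 := by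
        simpa using finrank_span_le_card (R := ℝ) ({Function.update (0 : Fin p → ℝ) i 1} : Set _)

lemma walk {p q : ℕ} (m M : Matrix (Fin p) (Fin q) ℝ) (r : ℕ) :
    ∀ n : ℕ, ∀ A B : Matrix (Fin p) (Fin q) ℝ,
    (Finset.univ.filter (fun ij : Fin p × Fin q => A ij.1 ij.2 ≠ B ij.1 ij.2)).card ≤ n →
    (∀ i j, A i j ∈ Set.Icc (m i j) (M i j)) →
    (∀ i j, B i j ∈ Set.Icc (m i j) (M i j)) →
    A.rank ≤ r → r ≤ B.rank →
    ∃ C : Matrix (Fin p) (Fin q) ℝ,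
      (∀ i j, C i j ∈ Set.Icc (m i j) (M i j)) ∧ C.rank = r := by
  classical
  intro n
  induction n with
  | zero =>
      intro A B hcard hA hB h1 h2
      have hAB : A = B := by
        ext i j
        by_contra hne
        have : ((i, j) : Fin p × Fin q) ∈
            Finset.univ.filter (fun ij : Fin p × Fin q => A ij.1 ij.2 ≠ B ij.1 ij.2) := by
          simp [hne]
        have := Finset.card_pos.mpr ⟨_, this⟩
        omega
      exact ⟨A, hA, le_antisymm h1 (hAB ▸ h2)⟩
  | succ n ih =>
      intro A B hcard hA hB h1 h2
      by_cases hr : A.rank = r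
      · exact ⟨A, hA, hr⟩
      have hlt : A.rank < r := lt_of_le_of_ne h1 hr
      have hAB : A ≠ B := by
        rintro rfl
        omega
      have hne : ∃ ij : Fin p × Fin q, A ij.1 ij.2 ≠ B ij.1 ij.2 := by
        by_contra h
        push_neg at h
        exact hAB (by ext i j; exact h (i, j))
      obtain ⟨⟨i, j⟩, hij⟩ := hne
      set A' := A + Matrix.single i j (B i j - A i j) with hA'def
      have hA'same : A' i j = B i j := by
        simp [hA'def, Matrix.add_apply]
      have hA'other : ∀ i' j', (i', j') ≠ (i, j) → A' i' j' = A i' j' := by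
        intro i' j' h
        have : ¬(i = i' ∧ j = j') := by
          rintro ⟨rfl, rfl⟩; exact h rfl
        simp only [hA'def, Matrix.add_apply]
        rw [Matrix.single_apply_of_ne (h := this), add_zero]
      have hA'in : ∀ i' j', A' i' j' ∈ Set.Icc (m i' j') (M i' j') := by
        intro i' j'
        rcases eq_or_ne (i', j') (i, j) with h | h
        · obtain ⟨rfl, rfl⟩ := Prod.ext_iff.mp h
          rw [hA'same]; exact hB _ _
        · rw [hA'other _ _ h]; exact hA i' j'
      have hrank' : A'.rank ≤ r := by
        have := myrank_add_le A (Matrix.single i j (B i j - A i j))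
        have h2 := myrank_std_le i j (B i j - A i j)
        rw [← hA'def] at this
        omega
      have hcard' : (Finset.univ.filter
          (fun ij : Fin p × Fin q => A' ij.1 ij.2 ≠ B ij.1 ij.2)).card ≤ n := by
        have hsub : Finset.univ.filter
            (fun ij : Fin p × Fin q => A' ij.1 ij.2 ≠ B ij.1 ij.2) ⊆
            (Finset.univ.filter
              (fun ij : Fin p × Fin q => A ij.1 ij.2 ≠ B ij.1 ij.2)).erase (i, j) := by
          intro ⟨i', j'⟩ h
          simp only [Finset.mem_filter, Finset.mem_univ, true_and] at h
          have hne' : (i', j') ≠ (i, j) := by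
            intro heq
            obtain ⟨rfl, rfl⟩ := Prod.ext_iff.mp heq
            exact h hA'same
          rw [Finset.mem_erase]
          refine ⟨hne', ?_⟩
          simp only [Finset.mem_filter, Finset.mem_univ, true_and]
          rwa [hA'other _ _ hne'] at h
        have hmem : ((i, j) : Fin p × Fin q) ∈ Finset.univ.filter
            (fun ij : Fin p × Fin q => A ij.1 ij.2 ≠ B ij.1 ij.2) := by
          simp [hij]
        have := Finset.card_le_card hsub
        rw [Finset.card_erase_of_mem hmem] at this
        omega
      exact ih A' B hcard' hA'in hB hrank' h2

theorem rkRange_eq_Icc (p q : ℕ) (m M : Matrix (Fin p) (Fin q) ℝ)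
    (hle : ∀ i j, m i j ≤ M i j) :
    {r : ℕ | ∃ A : Matrix (Fin p) (Fin q) ℝ,
        (∀ i j, A i j ∈ Set.Icc (m i j) (M i j)) ∧ A.rank = r} =
      Set.Icc
        (sInf {r : ℕ | ∃ A : Matrix (Fin p) (Fin q) ℝ,
          (∀ i j, A i j ∈ Set.Icc (m i j) (M i j)) ∧ A.rank = r})
        (sSup {r : ℕ | ∃ A : Matrix (Fin p) (Fin q) ℝ,
          (∀ i j, A i j ∈ Set.Icc (m i j) (M i j)) ∧ A.rank = r}) := by
  classical
  set S := {r : ℕ | ∃ A : Matrix (Fin p) (Fin q) ℝ,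
      (∀ i j, A i j ∈ Set.Icc (m i j) (M i j)) ∧ A.rank = r} with hS
  have hne : S.Nonempty := ⟨m.rank, m, fun i j => ⟨le_refl _, hle i j⟩, rfl⟩
  have hbdd : BddAbove S := by
    refine ⟨q, ?_⟩
    rintro r ⟨A, _, rfl⟩
    exact A.rank_le_width
  ext r
  constructor
  · rintro ⟨A, hA, rfl⟩
    exact ⟨Nat.sInf_le ⟨A, hA, rfl⟩, le_csSup hbdd ⟨A, hA, rfl⟩⟩
  · rintro ⟨h1, h2⟩
    obtain ⟨A0, hA0, hr0⟩ := Nat.sInf_mem hne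
    obtain ⟨A1, hA1, hr1⟩ := Nat.sSup_mem hne hbdd
    exact walk m M r _ A0 A1 le_rfl hA0 hA1 (hr0 ▸ h1) (hr1 ▸ h2)
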